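/- Let N = Z^2 with dual M, let a1 != a2 in N and chi in M with chi(a1) = chi(a2) = 1, and let L be the lattice length of a1 - a2. For a positive integer b <= L, the set of all chi' in M satisfying chi'(a1) >= 0, chi'(a2) >= 0, chi'(a1) < b, and chi'(a2) < b consists exactly of the multiples b'*chi with integers 0 <= b' < b. -/

import Mathlib

open Matrix

/-- The lattice length of `v ∈ ℤ²`: the largest integer `d` such that `v/d` is a lattice
vector, i.e. the gcd of the coordinates of `v` (for `v ≠ 0`). -/
def latticeLength2 (v : Fin 2 → ℤ) : ℕ := Int.gcd (v 0) (v 1)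

/-- second part of Lemma `smalllaticepoints`: let `N = ℤ²` with dual
`M`, `a1 ≠ a2` in `N`, `χ ∈ M` with `χ(a1) = χ(a2) = 1`, and let `L` be the lattice length
of `a1 - a2`.  For a positive integer `b ≤ L`, the set of all `χ' ∈ M` with
`χ'(a1) ≥ 0`, `χ'(a2) ≥ 0`, `χ'(a1) < b` and `χ'(a2) < b` consists exactly of the
multiples `b' • χ` with `0 ≤ b' < b`. -/
theorem stmt9 (a1 a2 chi : Fin 2 → ℤ)
    (hne : a1 ≠ a2) (h1 : chi ⬝ᵥ a1 = 1) (h2 : chi ⬝ᵥ a2 = 1)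
    (b : ℕ) (hb : 0 < b) (hbL : b ≤ latticeLength2 (a1 - a2)) :
    ∀ chi' : Fin 2 → ℤ,
      (0 ≤ chi' ⬝ᵥ a1 ∧ 0 ≤ chi' ⬝ᵥ a2 ∧ chi' ⬝ᵥ a1 < (b : ℤ) ∧ chi' ⬝ᵥ a2 < (b : ℤ)) ↔
      ∃ b' : ℤ, 0 ≤ b' ∧ b' < (b : ℤ) ∧ chi' = b' • chi := by
  intro chi'
  simp only [dotProduct, Fin.sum_univ_two] at h1 h2 ⊢
  set p := a1 0 with hp; set q := a1 1 with hq
  set r := a2 0 with hr; set s := a2 1 with hs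
  set c := chi 0 with hc; set d := chi 1 with hd
  constructor
  · rintro ⟨hA, hB, hC, hD⟩
    set x := chi' 0 with hx; set y := chi' 1 with hy
    -- first: chi' ⬝ (a1 - a2) is divisible by the gcd
    have hg : ((latticeLength2 (a1 - a2) : ℤ)) ∣ (x * p + y * q) - (x * r + y * s) := by
      have hd0 : ((latticeLength2 (a1 - a2) : ℤ)) ∣ (p - r) :=
        Int.gcd_dvd_left ((a1 - a2) 0) ((a1 - a2) 1)
      have hd1 : ((latticeLength2 (a1 - a2) : ℤ)) ∣ (q - s) :=
        Int.gcd_dvd_right ((a1 - a2) 0) ((a1 - a2) 1)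
      have : (x * p + y * q) - (x * r + y * s) = x * (p - r) + y * (q - s) := by ring
      rw [this]
      exact dvd_add (Dvd.dvd.mul_left hd0 x) (Dvd.dvd.mul_left hd1 y)
    have heq : x * p + y * q = x * r + y * s := by
      have habs : ((x * p + y * q) - (x * r + y * s)).natAbs <
          ((latticeLength2 (a1 - a2) : ℤ)).natAbs := by
        have h1' : ((x * p + y * q) - (x * r + y * s)).natAbs < b := by omega
        have h2' : ((latticeLength2 (a1 - a2) : ℤ)).natAbs = latticeLength2 (a1 - a2) := by
          simp
        omega
      have := Int.eq_zero_of_dvd_of_natAbs_lt_natAbs hg habs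
      omega
    -- now the residual functional
    refine ⟨x * p + y * q, hA, hC, ?_⟩
    have hu : x - (x * p + y * q) * c = 0 ∧ y - (x * p + y * q) * d = 0 := by
      set X := x - (x * p + y * q) * c with hX
      set Y := y - (x * p + y * q) * d with hY
      have F1 : X * p + Y * q = 0 := by
        have : X * p + Y * q = (x * p + y * q) * (1 - (c * p + d * q)) := by
          rw [hX, hY]; ring
        rw [this, h1]; ring
      have F2 : X * r + Y * s = 0 := by
        have : X * r + Y * s = (x * r + y * s) - (x * p + y * q) * (c * r + d * s) := by
          rw [hX, hY]; ring
        rw [this, h2, heq]; ring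
      have hXD : X * (p * s - q * r) = 0 := by linear_combination s * F1 - q * F2
      have hYD : Y * (p * s - q * r) = 0 := by linear_combination p * F2 - r * F1
      rcases mul_eq_zero.mp hXD with hX0 | hD0
      · rcases mul_eq_zero.mp hYD with hY0 | hD0
        · exact ⟨hX0, hY0⟩
        · exfalso
          -- degenerate case: a1 and a2 are parallel
          have hcu : c * (p - r) + d * (q - s) = 0 := by linear_combination h1 - h2
          have hpw : p * (q - s) = q * (p - r) := by linear_combination -hD0
          have hw : q - s = 0 := by
            linear_combination (-(q - s)) * h1 + c * hpw + q * hcu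
          have hu0 : p - r = 0 := by
            linear_combination (-(p - r)) * h1 + (-d) * hpw + p * hcu
          apply hne
          funext i
          fin_cases i
          · simpa [← hp, ← hr] using (by omega : p = r)
          · simpa [← hq, ← hs] using (by omega : q = s)
      · exfalso
        have hcu : c * (p - r) + d * (q - s) = 0 := by linear_combination h1 - h2
        have hpw : p * (q - s) = q * (p - r) := by linear_combination -hD0
        have hw : q - s = 0 := by
          linear_combination (-(q - s)) * h1 + c * hpw + q * hcu
        have hu0 : p - r = 0 := by
          linear_combination (-(p - r)) * h1 + (-d) * hpw + p * hcu
        apply hne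
        funext i
        fin_cases i
        · simpa [← hp, ← hr] using (by omega : p = r)
        · simpa [← hq, ← hs] using (by omega : q = s)
    funext i
    fin_cases i
    · show x = (x * p + y * q) * c
      have := hu.1; omega
    · show y = (x * p + y * q) * d
      have := hu.2; omega
  · rintro ⟨b', hb0, hbb, rfl⟩
    simp only [Pi.smul_apply, smul_eq_mul]
    constructor
    · nlinarith [h1]
    refine ⟨by nlinarith [h2], ?_, ?_⟩
    · calc b' * c * p + b' * d * q = b' * (c * p + d * q) := by ring
        _ = b' := by rw [h1]; ring
        _ < b := hbb
    · calc b' * c * r + b' * d * s = b' * (c * r + d * s) := by ring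
        _ = b' := by rw [h2]; ring
        _ < b := hbb
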